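/- arXiv:1804.04498 — 4 statements merged into one kernel-verified Lean document; each statement's English description precedes it below -/
import Mathlib

section
/- The sequence (E_{2n+1}/(2n+1)!)_{n>=0} of tangent numbers divided by factorials is a Stieltjes moment sequence, i.e., there exists a positive measure mu on [0,infinity) such that E_{2n+1}/(2n+1)! = integral of x^n dmu(x) for all n >= 0. -/
open Real MeasureTheory

open Filter Finset Topology

noncomputable def qq (k : ℕ) : ℝ := ((2 * k + 1) * (π / 2)) ^ 2

lemma qq_pos (k : ℕ) : 0 < qq k := by
  unfold qq
  have h : (0:ℝ) < 2 * k + 1 := by positivity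
  positivity

lemma qq_ge (k : ℕ) : (π / 2) ^ 2 ≤ qq k := by
  unfold qq
  rw [mul_pow]
  have h1 : (1:ℝ) ≤ (2 * k + 1 : ℝ) ^ 2 := by
    have : (0:ℝ) ≤ (k:ℝ) := Nat.cast_nonneg k
    nlinarith
  nlinarith [sq_nonneg (π/2)]

lemma qq_ge_sq (k : ℕ) : ((k:ℝ) + 1) ^ 2 ≤ qq k := by
  unfold qq
  rw [mul_pow]
  have h1 : ((k:ℝ) + 1) ^ 2 ≤ (2 * k + 1 : ℝ) ^ 2 := by
    have h3 : (0:ℝ) ≤ (k:ℝ) + 1 := by positivity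
    nlinarith
  have h2 : (1:ℝ) ≤ (π/2) ^ 2 := by nlinarith [pi_gt_three]
  nlinarith [sq_nonneg ((2*k+1:ℝ))]

lemma summable_qq_inv : Summable (fun k => 1 / qq k) := by
  have h : Summable (fun k : ℕ => 1 / ((k:ℝ) + 1) ^ 2) := by
    have := (summable_nat_add_iff (f := fun k : ℕ => 1 / (k:ℝ) ^ 2) 1).2
      (Real.summable_one_div_nat_pow.2 one_lt_two)
    simpa using this
  refine Summable.of_nonneg_of_le (fun k => by have := qq_pos k; positivity) (fun k => ?_) h
  exact one_div_le_one_div_of_le (by positivity) (qq_ge_sq k)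

lemma prod_split (x : ℝ) (N : ℕ) :
    ∏ j ∈ range (2 * N), (1 - (2*x/π) ^ 2 / ((j:ℝ) + 1) ^ 2) =
      (∏ j ∈ range N, (1 - (x/π) ^ 2 / ((j:ℝ) + 1) ^ 2)) *
        ∏ k ∈ range N, (1 - x ^ 2 / qq k) := by
  induction N with
  | zero => simp
  | succ N ih =>
    have h2 : 2 * (N+1) = (2*N) + 1 + 1 := by ring
    rw [h2, prod_range_succ, prod_range_succ, prod_range_succ, prod_range_succ, ih]
    have hπ := pi_ne_zero
    have key1 : (1 - (2*x/π)^2 / (((2*N:ℕ):ℝ)+1)^2) = 1 - x^2/qq N := by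
      unfold qq
      have hd : ((2*N:ℕ):ℝ) + 1 ≠ 0 := by positivity
      have hd2 : ((2*(N:ℝ)) + 1) ≠ 0 := by positivity
      push_cast
      field_simp
    have key2 : (1 - (2*x/π)^2 / (((2*N+1:ℕ):ℝ)+1)^2) = 1 - (x/π)^2/(((N:ℕ):ℝ)+1)^2 := by
      have hd : ((N:ℝ)) + 1 ≠ 0 := by positivity
      push_cast
      field_simp
      ring
    rw [key1, key2]
    ring

lemma Qpos (x : ℝ) (hx : |x| < π/2) (N : ℕ) :
    0 < ∏ j ∈ range N, (1 - (x/π) ^ 2 / ((j:ℝ) + 1) ^ 2) := by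
  apply Finset.prod_pos
  intro j _
  have hπ := pi_pos
  have h1 : x^2 < (π/2)^2 := by
    have := abs_nonneg x
    nlinarith [sq_abs x]
  have h2 : (x/π)^2 < 1/4 := by
    rw [div_pow]
    rw [div_lt_iff₀ (by positivity)]
    nlinarith
  have h3 : (1:ℝ) ≤ ((j:ℝ)+1)^2 := by
    have : (1:ℝ) ≤ (j:ℝ)+1 := by have := Nat.cast_nonneg (α := ℝ) j; linarith
    nlinarith
  have h4 : (x/π)^2 / ((j:ℝ)+1)^2 < 1/4 := by
    calc (x/π)^2 / ((j:ℝ)+1)^2 ≤ (x/π)^2 / 1 := by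
          apply div_le_div_of_nonneg_left (by positivity) one_pos h3
      _ = (x/π)^2 := by ring
      _ < 1/4 := h2
  linarith

lemma tendsto_cos_prod (x : ℝ) (hx : |x| < π/2) :
    Tendsto (fun N => ∏ k ∈ range N, (1 - x^2/qq k)) atTop (𝓝 (cos x)) := by
  rcases eq_or_ne x 0 with rfl | hx0
  · simp only [ne_eq, OfNat.ofNat_ne_zero, not_false_eq_true, zero_pow, zero_div, sub_zero,
      prod_const_one, cos_zero]
    exact tendsto_const_nhds
  · have hπ := pi_pos
    have hs2 := Real.tendsto_euler_sin_prod (2*x/π)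
    have hs1 := Real.tendsto_euler_sin_prod (x/π)
    have e2 : π * (2*x/π) = 2*x := by field_simp
    have e1 : π * (x/π) = x := by field_simp
    rw [e2] at hs2
    rw [e1] at hs1
    have hs2' : Tendsto (fun N : ℕ => 2*x * ∏ j ∈ range (2*N), (1 - (2*x/π) ^ 2 / ((j:ℝ) + 1) ^ 2))
        atTop (𝓝 (sin (2*x))) := hs2.comp (tendsto_id.const_mul_atTop' zero_lt_two)
    have hsin : sin x ≠ 0 := by
      rw [ne_eq, Real.sin_eq_zero_iff_of_lt_of_lt (by linarith [abs_lt.1 hx] ) (by linarith [abs_lt.1 hx])]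
      exact hx0
    have hden : Tendsto (fun N : ℕ => 2 * (x * ∏ j ∈ range N, (1 - (x/π) ^ 2 / ((j:ℝ) + 1) ^ 2)))
        atTop (𝓝 (2 * sin x)) := hs1.const_mul 2
    have hdiv := hs2'.div hden (by simpa using hsin)
    have hcos : sin (2*x) / (2 * sin x) = cos x := by
      rw [sin_two_mul]
      field_simp
    rw [hcos] at hdiv
    refine Tendsto.congr (fun N => ?_) hdiv
    show (2*x * ∏ j ∈ range (2*N), (1 - (2*x/π) ^ 2 / ((j:ℝ) + 1) ^ 2)) /
        (2 * (x * ∏ j ∈ range N, (1 - (x/π) ^ 2 / ((j:ℝ) + 1) ^ 2))) =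
        ∏ k ∈ range N, (1 - x^2/qq k)
    rw [prod_split]
    have hQ := (Qpos x hx N).ne'
    have hne : 2 * (x * ∏ j ∈ range N, (1 - (x/π) ^ 2 / ((j:ℝ) + 1) ^ 2)) ≠ 0 := by
      exact mul_ne_zero two_ne_zero (mul_ne_zero hx0 hQ)
    rw [show 2*x * ((∏ j ∈ range N, (1 - (x/π) ^ 2 / ((j:ℝ) + 1) ^ 2)) *
        ∏ k ∈ range N, (1 - x^2/qq k)) =
        (2 * (x * ∏ j ∈ range N, (1 - (x/π) ^ 2 / ((j:ℝ) + 1) ^ 2))) *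
        ∏ k ∈ range N, (1 - x^2/qq k) by ring]
    exact mul_div_cancel_left₀ _ hne

lemma sq_lt_qq {x : ℝ} (hx : |x| < π/2) (k : ℕ) : x^2 < qq k := by
  have h1 : x^2 < (π/2)^2 := by nlinarith [sq_abs x, abs_nonneg x, pi_pos]
  linarith [qq_ge k]

lemma factor_pos {x : ℝ} (hx : |x| < π/2) (k : ℕ) : 0 < 1 - x^2/qq k := by
  have h := sq_lt_qq hx k
  have h2 := qq_pos k
  rw [sub_pos, div_lt_one h2]
  exact h

lemma hasSum_log (x : ℝ) (hx : |x| < π/2) :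
    HasSum (fun k => Real.log (1 - x^2/qq k)) (Real.log (cos x)) := by
  have hpos := factor_pos hx
  have hcos : 0 < cos x := by
    apply cos_pos_of_mem_Ioo
    constructor <;> [linarith [abs_lt.1 hx |>.1]; linarith [abs_lt.1 hx |>.2]]
  have htend : Tendsto (fun N => ∑ k ∈ range N, Real.log (1 - x^2/qq k)) atTop
      (𝓝 (Real.log (cos x))) := by
    have hlog : Tendsto (fun N => Real.log (∏ k ∈ range N, (1 - x^2/qq k))) atTop
        (𝓝 (Real.log (cos x))) :=
      ((Real.continuousAt_log hcos.ne').tendsto).comp (tendsto_cos_prod x hx)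
    refine hlog.congr (fun N => ?_)
    exact Real.log_prod (fun k _ => (hpos k).ne')
  have hnonneg : ∀ k, 0 ≤ -Real.log (1 - x^2/qq k) := by
    intro k
    rw [neg_nonneg]
    apply Real.log_nonpos (hpos k).le
    have := qq_pos k
    have : 0 ≤ x^2/qq k := by positivity
    linarith
  have := (hasSum_iff_tendsto_nat_of_nonneg hnonneg (-(Real.log (cos x)))).2 ?_
  · simpa using this.neg
  · simpa using htend.neg

lemma hasSum_tan (t : ℝ) (ht : |t| < π/2) :
    HasSum (fun k => 2*t/(qq k - t^2)) (Real.tan t) := by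
  obtain ⟨r, hr1, hr2⟩ := exists_between ht
  have hr0 : 0 < r := lt_of_le_of_lt (abs_nonneg t) hr1
  have hrpi : |r| < π/2 := by rwa [abs_of_pos hr0]
  set s : Set ℝ := Metric.ball (0:ℝ) r with hs
  have hts : t ∈ s := by simpa [hs, Metric.mem_ball, Real.dist_eq] using hr1
  have hmem : ∀ y ∈ s, |y| < r := by
    intro y hy
    simpa [hs, Metric.mem_ball, Real.dist_eq] using hy
  -- denominators on s
  have hden : ∀ (y : ℝ), |y| ≤ r → ∀ k, 0 < qq k - y^2 := by
    intro y hy k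
    have : y^2 ≤ r^2 := by nlinarith [sq_abs y, sq_abs r, abs_nonneg y]
    have := sq_lt_qq hrpi k
    linarith
  -- summable bound
  have hc : 0 < 1 - r^2/(π/2)^2 := by
    have h1 : r^2 < (π/2)^2 := by nlinarith [sq_abs r, abs_nonneg r, pi_pos]
    have h2 : (0:ℝ) < (π/2)^2 := by positivity
    rw [sub_pos, div_lt_one h2]
    exact h1
  have hqc : ∀ k, qq k * (1 - r^2/(π/2)^2) ≤ qq k - r^2 := by
    intro k
    have h1 := qq_ge k
    have h2 : (0:ℝ) < (π/2)^2 := by positivity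
    have h3 : qq k * (r^2/(π/2)^2) ≥ r^2 := by
      rw [ge_iff_le, mul_div_assoc']
      rw [le_div_iff₀ h2]
      nlinarith [sq_nonneg r]
    nlinarith
  have hu : Summable (fun k => 2*r/(qq k - r^2)) := by
    refine Summable.of_nonneg_of_le (fun k => by have := hden r (le_of_eq (abs_of_pos hr0)) k; positivity)
      (fun k => ?_) ((summable_qq_inv.mul_left (2*r/(1 - r^2/(π/2)^2))))
    have h1 := hden r (le_of_eq (abs_of_pos hr0)) k
    have h2 := hqc k
    have h3 := qq_pos k
    rw [div_le_iff₀ h1]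
    have : 2*r/(1 - r^2/(π/2)^2) * (1/qq k) * (qq k * (1 - r^2/(π/2)^2)) = 2*r := by
      have hπr : 0 < π^2 - r^2*2^2 := by
        have h2 : (0:ℝ) < (π/2)^2 := by positivity
        have := (div_lt_one h2).2 (by nlinarith [hc] : r^2 < (π/2)^2)
        nlinarith
      field_simp
      exact div_self (by nlinarith)
    nlinarith [mul_le_mul_of_nonneg_left h2 (by positivity : (0:ℝ) ≤ 2*r/(1 - r^2/(π/2)^2) * (1/qq k))]
  -- uniform bound on terms
  have hbound : ∀ (k : ℕ) (y : ℝ), y ∈ s → ‖-(2*y/(qq k - y^2))‖ ≤ 2*r/(qq k - r^2) := by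
    intro k y hy
    have hy' := hmem y hy
    have hd1 := hden y hy'.le k
    have hd2 := hden r (le_of_eq (abs_of_pos hr0)) k
    rw [norm_neg, Real.norm_eq_abs, abs_div, abs_of_pos hd1]
    apply div_le_div₀ (by positivity) _ hd2 _
    · rw [abs_mul, abs_two]
      linarith [hy'.le]
    · have : y^2 ≤ r^2 := by nlinarith [sq_abs y, sq_abs r, abs_nonneg y]
      linarith
  have hunif : TendstoUniformlyOn
      (fun N y => ∑ k ∈ range N, -(2*y/(qq k - y^2)))
      (fun y => ∑' k, -(2*y/(qq k - y^2))) atTop s :=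
    tendstoUniformlyOn_tsum_nat hu hbound
  -- derivative of each partial sum
  have hderiv : ∀ (N : ℕ), ∀ y ∈ s, HasDerivAt (fun z => ∑ k ∈ range N, Real.log (1 - z^2/qq k))
      (∑ k ∈ range N, -(2*y/(qq k - y^2))) y := by
    intro N y hy
    have hy' : |y| < π/2 := lt_trans (hmem y hy) hr2
    apply HasDerivAt.fun_sum
    intro k _
    have h1 : HasDerivAt (fun z : ℝ => 1 - z^2/qq k) (-(2*y/qq k)) y := by
      have := ((hasDerivAt_pow 2 y).div_const (qq k)).const_sub 1
      simpa using this
    have h2 := h1.log (factor_pos hy' k).ne'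
    refine HasDerivAt.congr_deriv h2 (Eq.symm ?_)
    have h3 := factor_pos hy' k
    have h4 := qq_pos k
    have h5 : 0 < qq k - y^2 := hden y (hmem y hy).le k
    rw [eq_comm, div_eq_iff h3.ne']
    field_simp
  have hlim : ∀ y ∈ s, Tendsto (fun N => ∑ k ∈ range N, Real.log (1 - y^2/qq k)) atTop
      (𝓝 (Real.log (cos y))) := by
    intro y hy
    exact (hasSum_log y (lt_trans (hmem y hy) hr2)).tendsto_sum_nat
  have hmain : HasDerivAt (fun y => Real.log (cos y)) (∑' k, -(2*t/(qq k - t^2))) t :=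
    hasDerivAt_of_tendstoUniformlyOn Metric.isOpen_ball hunif
      (Eventually.of_forall hderiv) hlim hts
  have hcos : 0 < cos t := by
    apply cos_pos_of_mem_Ioo
    constructor <;> [linarith [abs_lt.1 ht |>.1]; linarith [abs_lt.1 ht |>.2]]
  have hother : HasDerivAt (fun y => Real.log (cos y)) (-Real.tan t) t := by
    have := (Real.hasDerivAt_cos t).log hcos.ne'
    convert this using 1
    rw [Real.tan_eq_sin_div_cos, neg_div]
  have heqd : ∑' k, -(2*t/(qq k - t^2)) = -Real.tan t := hmain.unique hother
  have hsummable : Summable (fun k => -(2*t/(qq k - t^2))) := by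
    apply Summable.of_norm
    refine Summable.of_nonneg_of_le (fun k => norm_nonneg _) (fun k => hbound k t hts) hu
  have := hsummable.hasSum
  rw [heqd] at this
  simpa using this.neg

lemma one_le_qq (k : ℕ) : 1 ≤ qq k := by
  have h := qq_ge k
  have : (1:ℝ) ≤ (π/2)^2 := by nlinarith [pi_gt_three]
  linarith

lemma summable_b (n : ℕ) : Summable (fun k => 2 / qq k ^ (n+1)) := by
  refine Summable.of_nonneg_of_le (fun k => by have := qq_pos k; positivity) (fun k => ?_)
    (summable_qq_inv.mul_left 2)
  have h1 := qq_pos k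
  have h2 : qq k ≤ qq k ^ (n+1) := le_self_pow₀ (one_le_qq k) (Nat.succ_ne_zero n)
  rw [div_le_iff₀ (by positivity)]
  have : (1:ℝ) ≤ 1 / qq k * qq k ^ (n+1) := by
    rw [one_div, inv_mul_eq_div, le_div_iff₀ h1, one_mul]
    exact h2
  nlinarith

lemma geom_hasSum (t : ℝ) (ht : |t| < π/2) (k : ℕ) :
    HasSum (fun n => 2 * t^(2*n+1) / qq k ^ (n+1)) (2*t/(qq k - t^2)) := by
  have hq := qq_pos k
  have hlt := sq_lt_qq ht k
  have hx0 : 0 ≤ t^2/qq k := by positivity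
  have hx1 : t^2/qq k < 1 := (div_lt_one hq).2 hlt
  have hgeom := (hasSum_geometric_of_lt_one hx0 hx1).mul_left (2*t/qq k)
  have heq : (fun n : ℕ => 2*t/qq k * (t^2/qq k)^n) = fun n => 2 * t^(2*n+1) / qq k ^ (n+1) := by
    funext n
    have : ((t^2/qq k)^n : ℝ) = t^(2*n) / qq k^n := by rw [div_pow, pow_mul]
    rw [this, pow_succ]
    field_simp
    ring
  rw [heq] at hgeom
  suffices hv : 2*t/(qq k - t^2) = 2 * t / qq k * (1 - t ^ 2 / qq k)⁻¹ from hv ▸ hgeom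
  have hne : qq k - t^2 ≠ 0 := by linarith
  have hne2 : 1 - t^2/qq k ≠ 0 := by
    have := (div_lt_one hq).2 hlt
    linarith
  field_simp

lemma hasSum_coeff (t : ℝ) (ht : |t| < π/2) :
    HasSum (fun n => (∑' k, 2 / qq k ^ (n+1)) * t^(2*n+1)) (Real.tan t) := by
  have ha : |(|t|)| < π/2 := by rwa [abs_abs]
  set F : ℕ × ℕ → ℝ := fun p => 2 * t^(2*p.2+1) / qq p.1 ^ (p.2+1) with hFdef
  set G : ℕ × ℕ → ℝ := fun p => 2 * |t|^(2*p.2+1) / qq p.1 ^ (p.2+1) with hGdef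
  have hGk : ∀ k, HasSum (fun n => G (k,n)) (2*|t|/(qq k - t^2)) := by
    intro k
    have := geom_hasSum |t| ha k
    rwa [sq_abs] at this
  have hGnonneg : 0 ≤ G := by
    intro p
    have := qq_pos p.1
    simp only [hGdef]
    positivity
  have hGsum : Summable G := by
    rw [summable_prod_of_nonneg hGnonneg]
    refine ⟨fun k => (hGk k).summable, ?_⟩
    have h2 : Summable (fun k => 2*|t|/(qq k - t^2)) := by
      have := (hasSum_tan |t| ha).summable
      rwa [sq_abs] at this
    refine h2.congr (fun k => ?_)
    exact ((hGk k).tsum_eq).symm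
  have hF : Summable F := by
    apply Summable.of_norm
    refine hGsum.congr (fun p => ?_)
    have hq := qq_pos p.1
    simp only [hGdef, hFdef, Real.norm_eq_abs, abs_div, abs_mul, abs_two, abs_pow,
      abs_of_pos (pow_pos hq _)]
  have hFk : ∀ k, HasSum (fun n => F (k,n)) (2*t/(qq k - t^2)) := fun k => geom_hasSum t ht k
  -- swap
  have hswap : Summable (fun p : ℕ × ℕ => F p.swap) := hF.prod_symm
  have h1 : ∑' p : ℕ × ℕ, F p = ∑' k, ∑' n, F (k,n) := hF.tsum_prod
  have h2 : ∑' p : ℕ × ℕ, F p = ∑' n, ∑' k, F (k,n) := by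
    rw [← (Equiv.prodComm ℕ ℕ).tsum_eq F]
    exact hswap.tsum_prod
  have h3 : ∑' k, ∑' n, F (k,n) = Real.tan t := by
    rw [tsum_congr (fun k => (hFk k).tsum_eq)]
    exact (hasSum_tan t ht).tsum_eq
  have htarg : ∀ n, ∑' k, F (k,n) = (∑' k, 2 / qq k ^ (n+1)) * t^(2*n+1) := by
    intro n
    rw [← tsum_mul_right]
    refine tsum_congr (fun k => ?_)
    simp only [hFdef]
    ring
  have hsummable : Summable (fun n => (∑' k, 2 / qq k ^ (n+1)) * t^(2*n+1)) := by
    have := hswap.prod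
    refine this.congr (fun n => ?_)
    simpa using htarg n
  have : ∑' n, (∑' k, 2 / qq k ^ (n+1)) * t^(2*n+1) = Real.tan t := by
    rw [← tsum_congr htarg, ← h2, h1, h3]
  exact this ▸ hsummable.hasSum

lemma one_lt_half_pi : (1:ℝ) < π/2 := by nlinarith [pi_gt_three]

set_option maxHeartbeats 1000000 in
lemma zero_coeff {d : ℕ → ℝ}
    (hd : ∀ t : ℝ, |t| < π/2 → HasSum (fun n => d n * t^(2*n+1)) 0) :
    ∀ n, d n = 0 := by
  have hsum : Summable (fun n => |d n|) := by
    rw [summable_abs_iff]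
    have := (hd 1 (by rw [abs_one]; exact one_lt_half_pi)).summable
    simpa using this
  set C := ∑' n, |d n| with hC
  have hC0 : 0 ≤ C := tsum_nonneg (fun n => abs_nonneg _)
  intro n
  induction n using Nat.strong_induction_on with
  | _ n ih =>
  have key : ∀ t : ℝ, 0 < t → t ≤ 1 → |d n| ≤ C * t^2 := by
    intro t ht0 ht1
    have htpi : |t| < π/2 := by
      rw [abs_of_pos ht0]; linarith [one_lt_half_pi]
    set f : ℕ → ℝ := fun m => d m * t^(2*m+1) with hf
    have h0 : ∑' m, f m = 0 := (hd t htpi).tsum_eq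
    have hsummable : Summable f := (hd t htpi).summable
    have hsplit := hsummable.sum_add_tsum_nat_add (n+1)
    have hsum_eq : ∑ m ∈ range (n+1), f m = d n * t^(2*n+1) := by
      refine Finset.sum_eq_single_of_mem n (self_mem_range_succ n) ?_
      intro m hm hmn
      have hmn' : m < n := lt_of_le_of_ne (Nat.lt_succ_iff.1 (mem_range.1 hm)) hmn
      simp only [hf, ih m hmn', zero_mul]
    rw [h0, hsum_eq] at hsplit
    have heq : d n * t^(2*n+1) = -∑' m, f (m+(n+1)) := by linear_combination hsplit
    have htail : Summable (fun m => |d (m+(n+1))|) := (summable_nat_add_iff (n+1)).2 hsum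
    have habs : ∀ m, |f (m+(n+1))| = |d (m+(n+1))| * t^(2*(m+(n+1))+1) := by
      intro m
      simp only [hf]
      rw [abs_mul, abs_of_pos (pow_pos ht0 _)]
    have htail2 : Summable (fun m => |f (m+(n+1))|) := by
      have := ((summable_nat_add_iff (n+1)).2 hsummable).abs
      exact this
    have hb1 : |d n * t^(2*n+1)| ≤ ∑' m, |f (m+(n+1))| := by
      rw [heq, abs_neg, ← Real.norm_eq_abs]
      refine (norm_tsum_le_tsum_norm (by simpa [Real.norm_eq_abs] using htail2)).trans ?_
      simp [Real.norm_eq_abs]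
    have hb2 : ∑' m, |f (m+(n+1))| ≤ C * t^(2*n+3) := by
      have hle : ∀ m, |f (m+(n+1))| ≤ |d (m+(n+1))| * t^(2*n+3) := by
        intro m
        rw [habs m]
        apply mul_le_mul_of_nonneg_left _ (abs_nonneg _)
        apply pow_le_pow_of_le_one ht0.le ht1
        omega
      have hs2 : Summable (fun m => |d (m+(n+1))| * t^(2*n+3)) := htail.mul_right _
      calc ∑' m, |f (m+(n+1))|
          ≤ ∑' m, |d (m+(n+1))| * t^(2*n+3) := Summable.tsum_le_tsum hle htail2 hs2
        _ = (∑' m, |d (m+(n+1))|) * t^(2*n+3) := tsum_mul_right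
        _ ≤ C * t^(2*n+3) := by
            apply mul_le_mul_of_nonneg_right _ (pow_nonneg ht0.le _)
            have h5 := hsum.sum_add_tsum_nat_add (n+1)
            have hpos : 0 ≤ ∑ m ∈ range (n+1), |d m| :=
              Finset.sum_nonneg (fun m _ => abs_nonneg _)
            rw [hC]
            linarith
    have hcomb : |d n| * t^(2*n+1) ≤ C * t^2 * t^(2*n+1) := by
      have h6 : |d n * t^(2*n+1)| = |d n| * t^(2*n+1) := by
        rw [abs_mul, abs_of_pos (pow_pos ht0 _)]
      rw [h6] at hb1
      have h3 : C * t^(2*n+3) = C * t^2 * t^(2*n+1) := by ring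
      linarith [hb1.trans hb2]
    exact le_of_mul_le_mul_right hcomb (pow_pos ht0 _)
  have htend : Tendsto (fun m : ℕ => C * (1/((m:ℝ)+1))^2) atTop (𝓝 0) := by
    have h1 : Tendsto (fun m : ℕ => 1/((m:ℝ)+1)) atTop (𝓝 0) :=
      tendsto_one_div_add_atTop_nhds_zero_nat
    have := (h1.pow 2).const_mul C
    simpa using this
  have hge : ∀ m : ℕ, |d n| ≤ C * (1/((m:ℝ)+1))^2 := by
    intro m
    apply key
    · positivity
    · rw [div_le_one (by positivity)]
      linarith [Nat.cast_nonneg (α := ℝ) m]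
  have hle0 : |d n| ≤ 0 := ge_of_tendsto htend (Eventually.of_forall hge)
  exact abs_eq_zero.1 (le_antisymm hle0 (abs_nonneg _))

theorem tangent_numbers_stieltjes (E : ℕ → ℝ)
    (hE : ∀ t : ℝ, |t| < π / 2 →
      HasSum (fun n : ℕ => E (2 * n + 1) * t ^ (2 * n + 1) / ((2 * n + 1).factorial : ℝ))
        (Real.tan t)) :
    ∃ μ : Measure ℝ, μ {x : ℝ | x < 0} = 0 ∧
      ∀ n : ℕ, Integrable (fun x : ℝ => x ^ n) μ ∧
        E (2 * n + 1) / ((2 * n + 1).factorial : ℝ) = ∫ x : ℝ, x ^ n ∂μ := by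
  set b : ℕ → ℝ := fun n => ∑' k, 2 / qq k ^ (n+1) with hb
  set a : ℕ → ℝ := fun n => E (2 * n + 1) / ((2 * n + 1).factorial : ℝ) with ha
  -- coefficient identification
  have hab : ∀ n, a n = b n := by
    have hzero : ∀ t : ℝ, |t| < π/2 → HasSum (fun n => (a n - b n) * t^(2*n+1)) 0 := by
      intro t ht
      have h1 : HasSum (fun n => a n * t^(2*n+1)) (Real.tan t) := by
        have heq : (fun n : ℕ => E (2*n+1) * t^(2*n+1) / ((2*n+1).factorial : ℝ)) =
            fun n => a n * t^(2*n+1) := by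
          funext n
          rw [ha]
          ring
        exact heq ▸ hE t ht
      have h2 : HasSum (fun n => b n * t^(2*n+1)) (Real.tan t) := hasSum_coeff t ht
      have h3 := h1.sub h2
      rw [sub_self] at h3
      have heq2 : (fun n => a n * t^(2*n+1) - b n * t^(2*n+1)) =
          fun n => (a n - b n) * t^(2*n+1) := by
        funext n
        ring
      exact heq2 ▸ h3
    intro n
    have := zero_coeff hzero n
    linarith
  -- the measure
  set μ : Measure ℝ :=
    Measure.sum (fun k => ENNReal.ofReal (2/qq k) • Measure.dirac ((1:ℝ)/qq k)) with hμ
  have hterm : ∀ n k, (2/qq k) * ((1/qq k)^n) = 2 / qq k ^ (n+1) := by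
    intro n k
    have := qq_pos k
    rw [div_pow, one_pow, div_mul_div_comm, mul_one, pow_succ']
  have hterm_nonneg : ∀ n k, 0 ≤ (2/qq k) * ((1/qq k)^n) := by
    intro n k
    have := qq_pos k
    positivity
  have hsummable : ∀ n, Summable (fun k => (2/qq k) * ((1/qq k)^n)) := by
    intro n
    refine (summable_b n).congr (fun k => ?_)
    rw [hterm]
  refine ⟨μ, ?_, fun n => ?_⟩
  · rw [hμ]
    have hset : {x : ℝ | x < 0} = Set.Iio 0 := rfl
    rw [hset, Measure.sum_apply _ measurableSet_Iio]
    have : ∀ k : ℕ, (ENNReal.ofReal (2/qq k) • Measure.dirac ((1:ℝ)/qq k)) (Set.Iio 0) = 0 := by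
      intro k
      rw [Measure.smul_apply, Measure.dirac_apply' _ measurableSet_Iio]
      have hk : (1:ℝ)/qq k ∉ Set.Iio 0 := by
        have := qq_pos k
        simp only [Set.mem_Iio, not_lt]
        positivity
      rw [Set.indicator_of_notMem hk]
      simp
    simp only [this, tsum_zero]
  · have hInt : Integrable (fun x : ℝ => x ^ n) μ := by
      constructor
      · exact (measurable_id.pow_const n).aestronglyMeasurable
      · rw [hasFiniteIntegral_iff_norm, hμ, lintegral_sum_measure]
        have hcalc : ∀ k : ℕ, ∫⁻ x, ENNReal.ofReal ‖x ^ n‖ ∂(ENNReal.ofReal (2/qq k) • Measure.dirac ((1:ℝ)/qq k))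
            = ENNReal.ofReal ((2/qq k) * ((1/qq k)^n)) := by
          intro k
          have hq := qq_pos k
          rw [lintegral_smul_measure, lintegral_dirac]
          rw [smul_eq_mul, ← ENNReal.ofReal_mul (by positivity)]
          congr 1
          rw [Real.norm_eq_abs, abs_of_pos (by positivity)]
        rw [tsum_congr hcalc, ← ENNReal.ofReal_tsum_of_nonneg (hterm_nonneg n) (hsummable n)]
        exact ENNReal.ofReal_lt_top
    refine ⟨hInt, ?_⟩
    have hint_eq : ∫ x : ℝ, x ^ n ∂μ = b n := by
      rw [hμ, integral_sum_measure (hμ ▸ hInt)]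
      have hcalc : ∀ k : ℕ, ∫ x : ℝ, x ^ n ∂(ENNReal.ofReal (2/qq k) • Measure.dirac ((1:ℝ)/qq k))
          = 2 / qq k ^ (n+1) := by
        intro k
        have hq := qq_pos k
        rw [integral_smul_measure, integral_dirac, ENNReal.toReal_ofReal (by positivity),
          smul_eq_mul, hterm]
      rw [tsum_congr hcalc]
    rw [hint_eq, ← hab n]
end

section
/- If (a_n)_{n>=0} and (b_n)_{n>=0} are Hamburger moment sequences, then their entrywise product (a_n * b_n)_{n>=0} is also a Hamburger moment sequence. -/
open Real MeasureTheory

/-- `a` is a Hamburger moment sequence: it is represented by a positive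
measure on `ℝ`. -/
def IsHamburgerMomentSeq (a : ℕ → ℝ) : Prop :=
  ∃ μ : Measure ℝ,
    ∀ n : ℕ, Integrable (fun x : ℝ => x ^ n) μ ∧ a n = ∫ x : ℝ, x ^ n ∂μ

theorem hamburger_entrywise_product
    (a b : ℕ → ℝ) (ha : IsHamburgerMomentSeq a) (hb : IsHamburgerMomentSeq b) :
    IsHamburgerMomentSeq (fun n : ℕ => a n * b n) := by
  obtain ⟨μ, hμ⟩ := ha
  obtain ⟨ν, hν⟩ := hb
  have hμf : IsFiniteMeasure μ := by
    have := (hμ 0).1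
    simp only [pow_zero] at this
    rcases (integrable_const_iff (c := (1 : ℝ))).1 this with h | h
    · exact absurd h one_ne_zero
    · exact h
  have hνf : IsFiniteMeasure ν := by
    have := (hν 0).1
    simp only [pow_zero] at this
    rcases (integrable_const_iff (c := (1 : ℝ))).1 this with h | h
    · exact absurd h one_ne_zero
    · exact h
  have hmeas : Measurable (fun p : ℝ × ℝ => p.1 * p.2) :=
    measurable_fst.mul measurable_snd
  refine ⟨(μ.prod ν).map (fun p : ℝ × ℝ => p.1 * p.2), fun n => ?_⟩
  have hpm : Measurable fun x : ℝ => x ^ n := by fun_prop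
  have hint : Integrable (fun p : ℝ × ℝ => p.1 ^ n * p.2 ^ n) (μ.prod ν) :=
    (hμ n).1.mul_prod (hν n).1
  have hcomp : Integrable (fun x : ℝ => x ^ n)
      ((μ.prod ν).map (fun p : ℝ × ℝ => p.1 * p.2)) := by
    rw [integrable_map_measure hpm.aestronglyMeasurable
      hmeas.aemeasurable]
    simpa [Function.comp_def, mul_pow] using hint
  refine ⟨hcomp, ?_⟩
  rw [integral_map hmeas.aemeasurable hpm.aestronglyMeasurable]
  simp only [mul_pow]
  rw [integral_prod_mul (fun x : ℝ => x ^ n) (fun y : ℝ => y ^ n)]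
  rw [(hμ n).2, (hν n).2]
end

section
/- If (a_n)_{n>=0} and (b_n)_{n>=0} are Stieltjes moment sequences, then (a_n * b_n)_{n>=0} is a Stieltjes moment sequence. -/
open Real MeasureTheory

/-- `a` is a Stieltjes moment sequence: it is represented by a positive
measure on `[0,∞)`. -/
def IsStieltjesMomentSeq (a : ℕ → ℝ) : Prop :=
  ∃ μ : Measure ℝ, μ {x : ℝ | x < 0} = 0 ∧
    ∀ n : ℕ, Integrable (fun x : ℝ => x ^ n) μ ∧ a n = ∫ x : ℝ, x ^ n ∂μ

theorem stieltjes_entrywise_product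
    (a b : ℕ → ℝ) (ha : IsStieltjesMomentSeq a) (hb : IsStieltjesMomentSeq b) :
    IsStieltjesMomentSeq (fun n : ℕ => a n * b n) := by
  obtain ⟨μ, hμ0, hμ⟩ := ha
  obtain ⟨ν, hν0, hν⟩ := hb
  have hμfin : IsFiniteMeasure μ := by
    have h := (hμ 0).1
    simp only [pow_zero] at h
    rcases (integrable_const_iff.mp h) with h1 | h1
    · exact absurd h1 one_ne_zero
    · exact h1
  have hνfin : IsFiniteMeasure ν := by
    have h := (hν 0).1
    simp only [pow_zero] at h
    rcases (integrable_const_iff.mp h) with h1 | h1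
    · exact absurd h1 one_ne_zero
    · exact h1
  have hm : Measurable (fun p : ℝ × ℝ => p.1 * p.2) := measurable_fst.mul measurable_snd
  refine ⟨(μ.prod ν).map (fun p : ℝ × ℝ => p.1 * p.2), ?_, ?_⟩
  · rw [Measure.map_apply hm (by exact measurableSet_Iio)]
    have hsub : (fun p : ℝ × ℝ => p.1 * p.2) ⁻¹' {x : ℝ | x < 0} ⊆
        ({x : ℝ | x < 0} ×ˢ Set.univ) ∪ (Set.univ ×ˢ {x : ℝ | x < 0}) := by
      rintro ⟨x, y⟩ hxy
      simp only [Set.mem_preimage, Set.mem_setOf_eq] at hxy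
      rcases lt_or_ge x 0 with hx | hx
      · exact Or.inl ⟨hx, trivial⟩
      · refine Or.inr ⟨trivial, ?_⟩
        by_contra hy
        exact absurd (mul_nonneg hx (not_lt.mp hy)) (not_le.mpr hxy)
    refine le_antisymm (le_trans (measure_mono hsub) ?_) (zero_le)
    refine le_trans (measure_union_le _ _) ?_
    rw [Measure.prod_prod, Measure.prod_prod, hμ0, hν0]
    simp
  · intro n
    have hint : Integrable (fun p : ℝ × ℝ => p.1 ^ n * p.2 ^ n) (μ.prod ν) :=
      (hμ n).1.mul_prod (hν n).1
    have heq : (fun p : ℝ × ℝ => (p.1 * p.2) ^ n) =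
        (fun p : ℝ × ℝ => p.1 ^ n * p.2 ^ n) := by
      funext p; exact mul_pow _ _ _
    constructor
    · rw [integrable_map_measure (by fun_prop) hm.aemeasurable]
      show Integrable (fun p : ℝ × ℝ => (p.1 * p.2) ^ n) (μ.prod ν)
      rw [heq]; exact hint
    · rw [integral_map hm.aemeasurable (by fun_prop)]
      show a n * b n = ∫ p : ℝ × ℝ, (p.1 * p.2) ^ n ∂(μ.prod ν)
      rw [heq, (hμ n).2, (hν n).2, ← integral_prod_mul]
end

section
/- For all n >= 0, the Springer number S_n equals (1/(2*sqrt(2))) times the integral over R of y^n * e^{(pi/4)y} / cosh(pi*y/2) dy; consequently (S_n)_{n>=0} is a Hamburger moment sequence. -/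
open Real MeasureTheory Set Filter

set_option maxHeartbeats 1000000 in
lemma coeff_eq_zero_of_hasSum_zero {c : ℕ → ℝ} {r : ℝ} (hr : 0 < r)
    (h : ∀ t : ℝ, |t| < r → HasSum (fun n => c n * t ^ n) 0) : ∀ n, c n = 0 := by
  obtain ⟨ρ, hρ, hρ2, hρr⟩ : ∃ ρ : ℝ, 0 < ρ ∧ ρ < r ∧ |ρ| < r :=
    ⟨r / 2, by positivity, by linarith, by rw [abs_of_pos (by positivity)]; linarith⟩
  have hbdd : BddAbove (Set.range fun n => |c n| * ρ ^ n) := by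
    have hs := (h ρ hρr).summable
    have h1 := hs.tendsto_atTop_zero
    have h2 : Tendsto (fun n => |c n| * ρ ^ n) atTop (nhds 0) := by
      have := h1.abs
      simp only [abs_zero] at this
      convert this using 2 with n
      rw [abs_mul, abs_pow, abs_of_pos hρ]
    exact h2.bddAbove_range
  obtain ⟨M, hM⟩ := hbdd
  have hMn : ∀ n, |c n| * ρ ^ n ≤ M := fun n => hM ⟨n, rfl⟩
  have hM0 : 0 ≤ M := le_trans (by positivity) (hMn 0)
  intro n
  induction n using Nat.strong_induction_on with
  | _ n ih =>
  have key : ∀ t : ℝ, t ≠ 0 → |t| < ρ / 2 → |c n| ≤ 2 * (M / ρ ^ (n + 1)) * |t| := by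
    intro t ht0 ht
    have htρ : |t| / ρ < 1 / 2 := by rw [div_lt_iff₀ hρ]; linarith
    have htρ0 : 0 ≤ |t| / ρ := by positivity
    have htr : |t| < r := by linarith
    have h1 := h t htr
    have h2 : HasSum (fun k => c (k + n) * t ^ (k + n)) 0 := by
      rw [hasSum_nat_add_iff (f := fun m => c m * t ^ m) n]
      rw [Finset.sum_eq_zero fun k hk => by
        rw [ih k (Finset.mem_range.mp hk), zero_mul], add_zero]
      exact h1
    have h3 : HasSum (fun k => t ^ n * (c (k + n) * t ^ k)) 0 := by
      convert h2 using 2 with k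
      rw [pow_add]; ring
    have h4 : HasSum (fun k => c (k + n) * t ^ k) 0 := by
      have := h3.mul_left (t ^ n)⁻¹
      simpa [← mul_assoc, inv_mul_cancel₀ (pow_ne_zero n ht0)] using this
    have h5 : HasSum (fun k => c (k + 1 + n) * t ^ (k + 1)) (0 - c n) := by
      rw [hasSum_nat_add_iff (f := fun k => c (k + n) * t ^ k) 1]
      simpa [Finset.sum_range_one] using h4
    have hcn : c n = - ∑' k, c (k + 1 + n) * t ^ (k + 1) := by
      rw [h5.tsum_eq]; ring
    have hmaj : ∀ k : ℕ, |c (k + 1 + n) * t ^ (k + 1)| ≤ (M / ρ ^ (n + 1)) * |t| * (|t| / ρ) ^ k := by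
      intro k
      have h6 : |c (k + 1 + n)| ≤ M / ρ ^ (k + 1 + n) := by
        rw [le_div_iff₀ (pow_pos hρ _)]
        exact hMn _
      rw [abs_mul, abs_pow]
      calc |c (k + 1 + n)| * |t| ^ (k + 1)
          ≤ M / ρ ^ (k + 1 + n) * |t| ^ (k + 1) :=
            mul_le_mul_of_nonneg_right h6 (by positivity)
        _ = (M / ρ ^ (n + 1)) * |t| * (|t| / ρ) ^ k := by
            rw [div_pow, show k + 1 + n = n + 1 + k by omega, pow_add, pow_succ]
            field_simp
            ring
    have hgeo : Summable (fun k : ℕ => (M / ρ ^ (n + 1)) * |t| * (|t| / ρ) ^ k) :=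
      Summable.mul_left _ (summable_geometric_of_lt_one htρ0 (by linarith))
    have habs : Summable (fun k => |c (k + 1 + n) * t ^ (k + 1)|) :=
      Summable.of_nonneg_of_le (fun k => abs_nonneg _) hmaj hgeo
    calc |c n| = |∑' k, c (k + 1 + n) * t ^ (k + 1)| := by rw [hcn, abs_neg]
      _ ≤ ∑' k, |c (k + 1 + n) * t ^ (k + 1)| := by
          have hn : (fun k : ℕ => ‖c (k + 1 + n) * t ^ (k + 1)‖) =
              fun k : ℕ => |c (k + 1 + n) * t ^ (k + 1)| := by
            funext k; rw [Real.norm_eq_abs]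
          have := norm_tsum_le_tsum_norm (f := fun k : ℕ => c (k + 1 + n) * t ^ (k + 1))
            (by rw [hn]; exact habs)
          rw [hn] at this
          exact le_trans (le_of_eq (Real.norm_eq_abs _).symm) this
      _ ≤ ∑' k, (M / ρ ^ (n + 1)) * |t| * (|t| / ρ) ^ k := Summable.tsum_le_tsum hmaj habs hgeo
      _ = (M / ρ ^ (n + 1)) * |t| * (1 - |t| / ρ)⁻¹ := by
          rw [tsum_mul_left, tsum_geometric_of_lt_one htρ0 (by linarith)]
      _ ≤ 2 * (M / ρ ^ (n + 1)) * |t| := by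
          have h8 : (1 - |t| / ρ)⁻¹ ≤ 2 := by
            have := inv_anti₀ (show (0:ℝ) < 1/2 by norm_num) (by linarith : 1/2 ≤ 1 - |t| / ρ)
            simpa using this
          calc (M / ρ ^ (n + 1)) * |t| * (1 - |t| / ρ)⁻¹
              ≤ (M / ρ ^ (n + 1)) * |t| * 2 :=
                mul_le_mul_of_nonneg_left h8 (by positivity)
            _ = 2 * (M / ρ ^ (n + 1)) * |t| := by ring
  by_contra hne
  set K := 2 * (M / ρ ^ (n + 1)) with hK
  have hKpos : 0 ≤ K := by positivity
  have hcpos : 0 < |c n| := abs_pos.mpr hne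
  set t := min (ρ / 4) (|c n| / (2 * (K + 1))) with htdef
  have ht1 : 0 < t := lt_min (by positivity) (by positivity)
  have ht2 : |t| < ρ / 2 := by
    rw [abs_of_pos ht1]
    calc t ≤ ρ / 4 := min_le_left _ _
      _ < ρ / 2 := by linarith
  have hkey := key t (ne_of_gt ht1) ht2
  rw [abs_of_pos ht1] at hkey
  have h9 : K * t ≤ K * (|c n| / (2 * (K + 1))) :=
    mul_le_mul_of_nonneg_left (min_le_right _ _) hKpos
  have h10 : K * (|c n| / (2 * (K + 1))) < |c n| := by
    rw [mul_div_assoc', div_lt_iff₀ (by positivity)]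
    nlinarith
  linarith

lemma integrableOn_pow_mul_exp (n : ℕ) {δ : ℝ} (hδ : 0 < δ) :
    IntegrableOn (fun y : ℝ => y ^ n * Real.exp (-(δ * y))) (Ioi 0) := by
  have h := integrableOn_rpow_mul_exp_neg_mul_rpow (p := 1) (s := n) (b := δ)
    (lt_of_lt_of_le neg_one_lt_zero (Nat.cast_nonneg n)) one_pos hδ
  apply h.congr_fun ?_ measurableSet_Ioi
  intro x hx
  simp [Real.rpow_natCast, Real.rpow_one, neg_mul]

lemma integrable_abs_pow_mul_exp (n : ℕ) {δ : ℝ} (hδ : 0 < δ) :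
    Integrable (fun y : ℝ => |y| ^ n * Real.exp (-(δ * |y|))) := by
  have h1 := integrableOn_pow_mul_exp n hδ
  have int_Ioi : IntegrableOn (fun y : ℝ => |y| ^ n * Real.exp (-(δ * |y|))) (Ioi 0) := by
    apply h1.congr_fun ?_ measurableSet_Ioi
    intro x hx
    simp [abs_of_pos (show (0:ℝ) < x from hx)]
  have int_Iic : IntegrableOn (fun y : ℝ => |y| ^ n * Real.exp (-(δ * |y|))) (Iic 0) := by
    rw [← Measure.map_neg_eq_self (volume : Measure ℝ)]
    have m : MeasurableEmbedding fun x : ℝ => -x := (Homeomorph.neg ℝ).measurableEmbedding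
    rw [m.integrableOn_map_iff]
    simp_rw [Function.comp_def, abs_neg, neg_preimage, neg_Iic, neg_zero]
    exact (integrableOn_Ici_iff_integrableOn_Ioi).mpr int_Ioi
  have := int_Iic.union int_Ioi
  rwa [Iic_union_Ioi, integrableOn_univ] at this

lemma integral_abs_pow_mul_exp (n : ℕ) {δ : ℝ} (hδ : 0 < δ) :
    ∫ y : ℝ, |y| ^ n * Real.exp (-(δ * |y|)) = 2 * (n.factorial / δ ^ (n + 1)) := by
  rw [integral_comp_abs (f := fun y => y ^ n * Real.exp (-(δ * y)))]
  have h := integral_rpow_mul_exp_neg_mul_Ioi (a := n + 1) (r := δ) (by positivity) hδ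
  have heq : ∫ t in Ioi (0:ℝ), t ^ ((n : ℝ) + 1 - 1) * Real.exp (-(δ * t)) =
      ∫ t in Ioi (0:ℝ), t ^ n * Real.exp (-(δ * t)) := by
    apply setIntegral_congr_fun measurableSet_Ioi
    intro x hx
    simp [add_sub_cancel_right, Real.rpow_natCast]
  rw [← heq, h]
  have h2 : ((n : ℝ) + 1) = ((n + 1 : ℕ) : ℝ) := by push_cast; ring
  rw [h2, Real.rpow_natCast, show ((n+1:ℕ):ℝ) = (n:ℝ)+1 by push_cast; ring,
    Real.Gamma_nat_eq_factorial]
  rw [div_pow, one_pow]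
  ring

lemma cosh_ge_half_exp_abs (x : ℝ) : Real.exp |x| / 2 ≤ Real.cosh x := by
  rw [Real.cosh_eq]
  rcases abs_cases x with ⟨h, _⟩ | ⟨h, _⟩ <;> rw [h] <;>
    [linarith [Real.exp_pos (-x)]; linarith [Real.exp_pos x]]

lemma main_bound (n : ℕ) {c d : ℝ} (hcd : |c| ≤ d) (y : ℝ) :
    |y ^ n * (Real.exp (c * y) / Real.cosh (π * y / 2))| ≤
      2 * (|y| ^ n * Real.exp (-((π / 2 - d) * |y|))) := by
  have hcosh : Real.exp |π * y / 2| / 2 ≤ Real.cosh (π * y / 2) := cosh_ge_half_exp_abs _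
  have hcoshpos : 0 < Real.cosh (π * y / 2) := Real.cosh_pos _
  have habs : |π * y / 2| = π / 2 * |y| := by
    rw [abs_div, abs_mul, abs_of_pos Real.pi_pos, abs_of_pos (by norm_num : (0:ℝ) < 2)]
    ring
  rw [habs] at hcosh
  have hexppos : 0 < Real.exp (π / 2 * |y|) / 2 := by positivity
  have h1 : Real.exp (c * y) ≤ Real.exp (d * |y|) :=
    Real.exp_le_exp.mpr <| by
      calc c * y ≤ |c * y| := le_abs_self _
        _ = |c| * |y| := abs_mul _ _
        _ ≤ d * |y| := mul_le_mul_of_nonneg_right hcd (abs_nonneg _)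
  have h2 : Real.exp (c * y) / Real.cosh (π * y / 2) ≤
      Real.exp (d * |y|) / (Real.exp (π / 2 * |y|) / 2) :=
    div_le_div₀ (Real.exp_pos _).le h1 hexppos hcosh
  have h3 : Real.exp (d * |y|) / (Real.exp (π / 2 * |y|) / 2) =
      2 * Real.exp (-((π / 2 - d) * |y|)) := by
    rw [div_div_eq_mul_div, mul_comm, mul_div_assoc, ← Real.exp_sub]
    congr 1
    ring
  rw [abs_mul, abs_pow, abs_div, abs_of_pos (Real.exp_pos _), abs_of_pos hcoshpos]
  calc |y| ^ n * (Real.exp (c * y) / Real.cosh (π * y / 2))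
      ≤ |y| ^ n * (2 * Real.exp (-((π / 2 - d) * |y|))) := by
        apply mul_le_mul_of_nonneg_left _ (by positivity)
        rw [← h3]; exact h2
    _ = 2 * (|y| ^ n * Real.exp (-((π / 2 - d) * |y|))) := by ring

lemma cont_main (n : ℕ) (c : ℝ) :
    Continuous (fun y : ℝ => y ^ n * (Real.exp (c * y) / Real.cosh (π * y / 2))) := by
  apply (continuous_pow n).mul
  apply Continuous.div
  · exact Real.continuous_exp.comp (continuous_const.mul continuous_id)
  · exact Real.continuous_cosh.comp ((continuous_const.mul continuous_id).div_const 2)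
  · exact fun y => (Real.cosh_pos _).ne'

lemma integrable_main (n : ℕ) {c : ℝ} (hc : |c| < π / 2) :
    Integrable (fun y : ℝ => y ^ n * (Real.exp (c * y) / Real.cosh (π * y / 2))) := by
  have hδ : 0 < π / 2 - |c| := by linarith
  apply Integrable.mono' ((integrable_abs_pow_mul_exp n hδ).const_mul 2)
    (cont_main n c).aestronglyMeasurable
  filter_upwards with y
  rw [Real.norm_eq_abs]
  exact main_bound n le_rfl y

lemma norm_integral_bound (n : ℕ) {c : ℝ} (hc : |c| < π / 2) :
    ∫ y : ℝ, ‖y ^ n * (Real.exp (c * y) / Real.cosh (π * y / 2))‖ ≤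
      4 * n.factorial / (π / 2 - |c|) ^ (n + 1) := by
  have hδ : 0 < π / 2 - |c| := by linarith
  calc ∫ y : ℝ, ‖y ^ n * (Real.exp (c * y) / Real.cosh (π * y / 2))‖
      ≤ ∫ y : ℝ, 2 * (|y| ^ n * Real.exp (-((π / 2 - |c|) * |y|))) := by
        apply integral_mono (integrable_main n hc).norm
          ((integrable_abs_pow_mul_exp n hδ).const_mul 2)
        intro y
        show ‖_‖ ≤ _
        rw [Real.norm_eq_abs]
        exact main_bound n le_rfl y
    _ = 2 * (2 * (n.factorial / (π / 2 - |c|) ^ (n + 1))) := by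
        rw [integral_const_mul, integral_abs_pow_mul_exp n hδ]
    _ = 4 * n.factorial / (π / 2 - |c|) ^ (n + 1) := by ring

lemma real_beta_integral {a b : ℝ} (ha : 0 < a) (hb : 0 < b) :
    Real.Gamma a * Real.Gamma b =
      Real.Gamma (a + b) * ∫ x in Ioo (0:ℝ) 1, x ^ (a - 1) * (1 - x) ^ (b - 1) := by
  have hC := Complex.Gamma_mul_Gamma_eq_betaIntegral
    (s := (a : ℂ)) (t := (b : ℂ)) (by simpa using ha) (by simpa using hb)
  have hbeta : Complex.betaIntegral (a : ℂ) (b : ℂ) =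
      ((∫ x in Ioo (0:ℝ) 1, x ^ (a - 1) * (1 - x) ^ (b - 1) : ℝ) : ℂ) := by
    rw [Complex.betaIntegral]
    rw [intervalIntegral.integral_of_le (by norm_num : (0:ℝ) ≤ 1)]
    rw [← MeasureTheory.integral_Ioc_eq_integral_Ioo (f := fun x : ℝ => x ^ (a-1) * (1-x) ^ (b-1))]
    rw [show ((∫ x in Ioc (0:ℝ) 1, x ^ (a - 1) * (1 - x) ^ (b - 1) : ℝ) : ℂ) =
      ∫ x in Ioc (0:ℝ) 1, ((x ^ (a - 1) * (1 - x) ^ (b - 1) : ℝ) : ℂ) from integral_ofReal.symm]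
    apply setIntegral_congr_fun measurableSet_Ioc
    intro x hx
    have hx0 : (0:ℝ) ≤ x := le_of_lt hx.1
    have hx1 : (0:ℝ) ≤ 1 - x := by linarith [hx.2]
    push_cast
    rw [Complex.ofReal_cpow hx0, Complex.ofReal_cpow hx1]
    push_cast
    ring
  rw [hbeta, ← Complex.ofReal_add, Complex.Gamma_ofReal, Complex.Gamma_ofReal,
    Complex.Gamma_ofReal, ← Complex.ofReal_mul, ← Complex.ofReal_mul,
    Complex.ofReal_inj] at hC
  exact hC

lemma mellin_one_add {s : ℝ} (hs0 : 0 < s) (hs1 : s < 1) :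
    ∫ u in Ioi (0:ℝ), u ^ (s - 1) / (1 + u) = π / Real.sin (π * s) := by
  set f : ℝ → ℝ := fun x => x / (1 - x) with hf
  have himg : f '' Ioo (0:ℝ) 1 = Ioi 0 := by
    ext u
    constructor
    · rintro ⟨x, ⟨hx0, hx1⟩, rfl⟩
      exact mem_Ioi.mpr (div_pos hx0 (by linarith))
    · intro hu
      have hu' : (0:ℝ) < u := hu
      refine ⟨u / (1 + u), ⟨by positivity, ?_⟩, ?_⟩
      · rw [div_lt_one (by linarith)]; linarith
      · have h1u : (1:ℝ) + u ≠ 0 := by positivity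
        simp only [hf]
        rw [div_eq_iff]
        · field_simp
          ring
        · intro h
          rw [sub_eq_zero] at h
          field_simp at h
          linarith
  have hderiv : ∀ x ∈ Ioo (0:ℝ) 1, HasDerivWithinAt f (1 / (1 - x) ^ 2) (Ioo 0 1) x := by
    intro x ⟨hx0, hx1⟩
    have h1x : (1:ℝ) - x ≠ 0 := by intro h; rw [sub_eq_zero] at h; linarith
    have h : HasDerivAt f ((1 * (1 - x) - x * -1) / (1 - x) ^ 2) x := by
      exact (hasDerivAt_id' x).div ((hasDerivAt_id' x).const_sub 1) h1x
    have heq : (1 * (1 - x) - x * -1) / (1 - x) ^ 2 = 1 / (1 - x) ^ 2 := by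
      congr 1; ring
    rw [heq] at h
    exact h.hasDerivWithinAt
  have hinj : InjOn f (Ioo 0 1) := by
    rintro x ⟨hx0, hx1⟩ y ⟨hy0, hy1⟩ hxy
    have h1x : (1:ℝ) - x ≠ 0 := by intro h; rw [sub_eq_zero] at h; linarith
    have h1y : (1:ℝ) - y ≠ 0 := by intro h; rw [sub_eq_zero] at h; linarith
    simp only [hf] at hxy
    field_simp at hxy
    linarith
  have hcov := integral_image_eq_integral_abs_deriv_smul measurableSet_Ioo hderiv hinj
    (fun u => u ^ (s - 1) / (1 + u))
  rw [himg] at hcov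
  rw [hcov]
  have hRHS : ∫ x in Ioo (0:ℝ) 1, |1 / (1 - x) ^ 2| • (f x ^ (s - 1) / (1 + f x)) =
      ∫ x in Ioo (0:ℝ) 1, x ^ (s - 1) * (1 - x) ^ (1 - s - 1) := by
    apply setIntegral_congr_fun measurableSet_Ioo
    rintro x ⟨hx0, hx1⟩
    have h1x : (0:ℝ) < 1 - x := by linarith
    have h1f : 1 + f x = 1 / (1 - x) := by
      simp only [hf]; field_simp; ring
    have hfx : f x ^ (s - 1) = x ^ (s - 1) * (1 - x) ^ (1 - s) := by
      simp only [hf]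
      rw [Real.div_rpow hx0.le h1x.le, div_eq_mul_inv,
        show (1:ℝ) - s = -(s-1) by ring, Real.rpow_neg h1x.le]
    show |1 / (1 - x) ^ 2| • (f x ^ (s - 1) / (1 + f x)) = x ^ (s - 1) * (1 - x) ^ (1 - s - 1)
    rw [smul_eq_mul, abs_of_pos (by positivity : (0:ℝ) < 1 / (1-x)^2), h1f, hfx]
    rw [show (1:ℝ) - s - 1 = (1 - s) + (-1) by ring, Real.rpow_add h1x, Real.rpow_neg_one]
    rw [show (1:ℝ) - s = -(s-1) by ring, Real.rpow_neg h1x.le]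
    field_simp
  rw [hRHS]
  have hb := real_beta_integral hs0 (by linarith : 0 < 1 - s)
  rw [show s + (1 - s) = 1 by ring, Real.Gamma_one, one_mul] at hb
  rw [← hb]
  exact Real.Gamma_mul_Gamma_one_sub s

lemma key_integral {c : ℝ} (hc : |c| < π / 2) :
    ∫ y : ℝ, Real.exp (c * y) / Real.cosh (π * y / 2) = 2 / Real.cos c := by
  have hπ : 0 < π := Real.pi_pos
  set s : ℝ := c / π + 1 / 2 with hs
  have hcabs := abs_lt.mp hc
  have hcπ : -(1/2 : ℝ) < c / π ∧ c / π < 1/2 := by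
    constructor
    · rw [neg_lt, ← neg_div, div_lt_iff₀ hπ]; nlinarith [hcabs.1]
    · rw [div_lt_iff₀ hπ]; nlinarith [hcabs.2]
  have hs0 : 0 < s := by rw [hs]; linarith [hcπ.1]
  have hs1 : s < 1 := by rw [hs]; linarith [hcπ.2]
  set f : ℝ → ℝ := fun y => Real.exp (π * y) with hf
  have himg : f '' univ = Ioi 0 := by
    rw [image_univ]
    ext u
    constructor
    · rintro ⟨y, rfl⟩; exact Real.exp_pos _
    · intro hu
      exact ⟨Real.log u / π, by rw [hf]; field_simp; rw [Real.exp_log hu]⟩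
  have hderiv : ∀ y ∈ (univ : Set ℝ), HasDerivWithinAt f (π * Real.exp (π * y)) univ y := by
    intro y _
    have h : HasDerivAt (fun y : ℝ => Real.exp (π * y)) (Real.exp (π * y) * (π * 1)) y :=
      HasDerivAt.exp ((hasDerivAt_id y).const_mul π)
    have h2 : Real.exp (π * y) * (π * 1) = π * Real.exp (π * y) := by ring
    rw [h2] at h
    exact h.hasDerivWithinAt
  have hinj : InjOn f univ := by
    rintro a - b - heq
    have := Real.exp_injective heq
    exact mul_left_cancel₀ hπ.ne' this
  have hcov := integral_image_eq_integral_abs_deriv_smul MeasurableSet.univ hderiv hinj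
    (fun u => u ^ (s - 1) / (1 + u))
  rw [himg] at hcov
  rw [mellin_one_add hs0 hs1] at hcov
  rw [Measure.restrict_univ] at hcov
  have hptwise : ∀ y : ℝ,
      |π * Real.exp (π * y)| • (f y ^ (s - 1) / (1 + f y)) =
        (π / 2) * (Real.exp (c * y) / Real.cosh (π * y / 2)) := by
    intro y
    have hexp : (0:ℝ) < Real.exp (π * y) := Real.exp_pos _
    rw [smul_eq_mul, abs_of_pos (by positivity)]
    rw [hf]
    rw [Real.rpow_def_of_pos hexp, Real.log_exp]
    have h1 : π * y * (s - 1) = c * y + π * y / 2 - π * y := by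
      rw [hs]; field_simp
    rw [h1, Real.cosh_eq]
    set E := Real.exp (π * y / 2) with hE
    have hEpos : 0 < E := Real.exp_pos _
    have h3 : Real.exp (π * y) = E * E := by
      rw [hE, ← Real.exp_add]; congr 1; ring
    simp only [Real.exp_sub, Real.exp_add, Real.exp_neg]
    rw [h3]
    have hApos : 0 < Real.exp (c * y) := Real.exp_pos _
    field_simp
    ring
  simp_rw [hptwise] at hcov
  rw [integral_const_mul] at hcov
  have hπs : π * s = c + π / 2 := by rw [hs]; field_simp
  rw [hπs, Real.sin_add_pi_div_two] at hcov
  have hcos : 0 < Real.cos c := Real.cos_pos_of_mem_Ioo ⟨hcabs.1, hcabs.2⟩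
  field_simp at hcov ⊢
  have h2 : π * 2 = π * ((∫ a : ℝ, Real.exp (c * a) / Real.cosh (π * a / 2)) * Real.cos c) := by
    linear_combination π * hcov
  have h3 := mul_left_cancel₀ hπ.ne' h2
  linarith

lemma pi4_lt : |π / 4| < π / 2 := by
  rw [abs_of_pos (by positivity : (0:ℝ) < π / 4)]
  linarith [Real.pi_pos]

lemma gen_fun {t : ℝ} (ht : |t| < π / 4) :
    HasSum (fun n : ℕ => (∫ y : ℝ, y ^ n * (Real.exp (π / 4 * y) / Real.cosh (π * y / 2)))
      * t ^ n / n.factorial) (2 * Real.sqrt 2 / (Real.cos t - Real.sin t)) := by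
  have hπ : 0 < π := Real.pi_pos
  set w : ℝ → ℝ := fun y => Real.exp (π / 4 * y) / Real.cosh (π * y / 2) with hw
  set F : ℕ → ℝ → ℝ := fun n y => t ^ n / n.factorial * (y ^ n * w y) with hF
  have hInt : ∀ n, Integrable (F n) := fun n => (integrable_main n pi4_lt).const_mul _
  have habs : π / 2 - |π / 4| = π / 4 := by
    rw [abs_of_pos (by positivity : (0:ℝ) < π / 4)]; ring
  have hgeo : Summable fun n : ℕ => 16 / π * (|t| / (π / 4)) ^ n := by
    apply Summable.mul_left
    apply summable_geometric_of_lt_one (by positivity)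
    rw [div_lt_one (by positivity)]
    exact ht
  have hle : ∀ n : ℕ, ∫ y : ℝ, ‖F n y‖ ≤ 16 / π * (|t| / (π / 4)) ^ n := by
    intro n
    have h1 : ∫ y : ℝ, ‖F n y‖ = |t ^ n / n.factorial| * ∫ y : ℝ, ‖y ^ n * w y‖ := by
      rw [← integral_const_mul]
      congr 1
      funext y
      simp only [hF]
      rw [norm_mul, Real.norm_eq_abs (t ^ n / _)]
    rw [h1]
    have h2 := norm_integral_bound n pi4_lt
    rw [habs] at h2
    have h3 : |t ^ n / (n.factorial : ℝ)| = |t| ^ n / n.factorial := by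
      rw [abs_div, abs_pow, Nat.abs_cast]
    rw [h3]
    calc |t| ^ n / n.factorial * ∫ y : ℝ, ‖y ^ n * w y‖
        ≤ |t| ^ n / n.factorial * (4 * n.factorial / (π / 4) ^ (n + 1)) := by
          apply mul_le_mul_of_nonneg_left h2 (by positivity)
      _ = 16 / π * (|t| / (π / 4)) ^ n := by
          have hn : (0:ℝ) < n.factorial := by exact_mod_cast n.factorial_pos
          rw [div_pow, div_pow, div_pow]
          field_simp
          ring
  have hsum : Summable fun n => ∫ y : ℝ, ‖F n y‖ :=
    Summable.of_nonneg_of_le (fun n => integral_nonneg fun y => norm_nonneg _) hle hgeo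
  have hswap := hasSum_integral_of_summable_integral_norm hInt hsum
  have hts : ∀ y : ℝ, ∑' n, F n y = Real.exp (t * y) * w y := by
    intro y
    have h2 : HasSum (fun n : ℕ => (t * y) ^ n / n.factorial) (Real.exp (t * y)) := by
      rw [Real.exp_eq_exp_ℝ]
      exact_mod_cast NormedSpace.expSeries_div_hasSum_exp (t * y)
    have h3 := (h2.mul_right (w y)).tsum_eq
    rw [← h3]
    exact tsum_congr fun n => by simp only [hF]; rw [mul_pow]; ring
  have hval : ∫ y : ℝ, ∑' n, F n y = 2 * Real.sqrt 2 / (Real.cos t - Real.sin t) := by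
    rw [integral_congr_ae (Filter.Eventually.of_forall hts)]
    have h5 : (fun y : ℝ => Real.exp (t * y) * w y) =
        fun y : ℝ => Real.exp ((t + π / 4) * y) / Real.cosh (π * y / 2) := by
      funext y
      simp only [hw]
      rw [mul_div_assoc', ← Real.exp_add]
      congr 2
      ring
    have htπ : |t + π / 4| < π / 2 := by
      rw [abs_lt] at ht ⊢; constructor <;> linarith
    rw [h5, key_integral htπ]
    have hcos : Real.cos (t + π / 4) = (Real.cos t - Real.sin t) * (Real.sqrt 2 / 2) := by
      rw [Real.cos_add, Real.cos_pi_div_four, Real.sin_pi_div_four]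
      ring
    have hpos : 0 < Real.cos (t + π / 4) :=
      Real.cos_pos_of_mem_Ioo ⟨(abs_lt.mp htπ).1, (abs_lt.mp htπ).2⟩
    have ha : 0 < Real.cos t - Real.sin t := by
      rw [hcos] at hpos
      by_contra hcon
      push_neg at hcon
      nlinarith [Real.sqrt_pos.mpr (show (0:ℝ) < 2 by norm_num)]
    have hs2 : Real.sqrt 2 * Real.sqrt 2 = 2 := Real.mul_self_sqrt (by norm_num)
    rw [hcos, div_eq_div_iff (by positivity) ha.ne']
    nlinarith [hs2]
  rw [hval] at hswap
  have hfinal : (fun n => ∫ y : ℝ, F n y) =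
      fun n : ℕ => (∫ y : ℝ, y ^ n * (Real.exp (π / 4 * y) / Real.cosh (π * y / 2)))
        * t ^ n / n.factorial := by
    funext n
    rw [hF, integral_const_mul]
    ring
  rwa [hfinal] at hswap

theorem springer_numbers_integral_representation (S : ℕ → ℝ)
    (hS : ∀ t : ℝ, |t| < π / 4 →
      HasSum (fun n : ℕ => S n * t ^ n / (n.factorial : ℝ))
        (1 / (Real.cos t - Real.sin t))) :
    (∀ n : ℕ,
      S n = (1 / (2 * Real.sqrt 2)) *
        ∫ y : ℝ, y ^ n * Real.exp (π / 4 * y) / Real.cosh (π * y / 2)) ∧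
    ∃ μ : Measure ℝ,
      ∀ n : ℕ, Integrable (fun x : ℝ => x ^ n) μ ∧ S n = ∫ x : ℝ, x ^ n ∂μ := by
  have hsqrt2 : 0 < Real.sqrt 2 := Real.sqrt_pos.mpr (by norm_num)
  have hπ : 0 < π := Real.pi_pos
  set T : ℕ → ℝ := fun n => 1 / (2 * Real.sqrt 2) *
    ∫ y : ℝ, y ^ n * Real.exp (π / 4 * y) / Real.cosh (π * y / 2) with hT
  have hGint : ∀ n : ℕ, (∫ y : ℝ, y ^ n * (Real.exp (π / 4 * y) / Real.cosh (π * y / 2))) =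
      ∫ y : ℝ, y ^ n * Real.exp (π / 4 * y) / Real.cosh (π * y / 2) := by
    intro n
    apply integral_congr_ae (Filter.Eventually.of_forall fun y => ?_)
    exact (mul_div_assoc _ _ _).symm
  have hTsum : ∀ t : ℝ, |t| < π / 4 →
      HasSum (fun n : ℕ => T n * t ^ n / n.factorial) (1 / (Real.cos t - Real.sin t)) := by
    intro t ht
    have h1 := (gen_fun ht).div_const (2 * Real.sqrt 2)
    have h2 : 2 * Real.sqrt 2 / (Real.cos t - Real.sin t) / (2 * Real.sqrt 2) =
        1 / (Real.cos t - Real.sin t) := by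
      rw [div_div, mul_comm (Real.cos t - Real.sin t), ← div_div,
        div_self (by positivity : (2 * Real.sqrt 2) ≠ 0)]
    rw [h2] at h1
    have h3 : (fun n : ℕ =>
        (∫ y : ℝ, y ^ n * (Real.exp (π / 4 * y) / Real.cosh (π * y / 2)))
          * t ^ n / n.factorial / (2 * Real.sqrt 2)) =
        fun n : ℕ => T n * t ^ n / n.factorial := by
      funext n
      rw [hT, hGint n]
      ring
    rwa [h3] at h1
  have hST : ∀ n, S n = T n := by
    have hzero := coeff_eq_zero_of_hasSum_zero (c := fun n => (S n - T n) / n.factorial)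
      (r := π / 4) (by positivity) ?_
    · intro n
      have h := hzero n
      rw [div_eq_zero_iff] at h
      rcases h with h | h
      · linarith [h]
      · exact absurd h (by exact_mod_cast n.factorial_ne_zero)
    · intro t ht
      have h := (hS t ht).sub (hTsum t ht)
      rw [sub_self] at h
      have heq : (fun n : ℕ => S n * t ^ n / n.factorial - T n * t ^ n / n.factorial) =
          fun n : ℕ => (S n - T n) / n.factorial * t ^ n := funext fun n => by ring
      rwa [heq] at h
  refine ⟨fun n => hST n, ?_⟩
  -- the measure
  set g : ℝ → ℝ := fun y => Real.exp (π / 4 * y) / Real.cosh (π * y / 2) / (2 * Real.sqrt 2)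
    with hg
  have hgnonneg : ∀ y, 0 ≤ g y := fun y => by
    rw [hg]
    positivity
  have hgcont : Continuous g := by
    rw [hg]
    apply Continuous.div_const
    apply Continuous.div
    · exact Real.continuous_exp.comp (continuous_const.mul continuous_id)
    · exact Real.continuous_cosh.comp ((continuous_const.mul continuous_id).div_const 2)
    · exact fun y => (Real.cosh_pos _).ne'
  have hmeas : Measurable fun y => Real.toNNReal (g y) := hgcont.measurable.real_toNNReal
  refine ⟨volume.withDensity fun y => (Real.toNNReal (g y) : ENNReal), fun n => ?_⟩
  have hsmul : (fun x : ℝ => Real.toNNReal (g x) • x ^ n) =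
      fun x : ℝ => 1 / (2 * Real.sqrt 2) *
        (x ^ n * (Real.exp (π / 4 * x) / Real.cosh (π * x / 2))) := by
    funext x
    rw [NNReal.smul_def, Real.coe_toNNReal (g x) (hgnonneg x), smul_eq_mul, hg]
    ring
  constructor
  · rw [integrable_withDensity_iff_integrable_smul hmeas, hsmul]
    exact (integrable_main n pi4_lt).const_mul _
  · rw [hST n, integral_withDensity_eq_integral_smul hmeas, hsmul,
      integral_const_mul, hGint n, hT]
end
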